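/- For a unit-root process y_t = y_{t-1} + u_t with y_0 = O_p(1) and (u_t) mean-zero uncorrelated with variance σ_u², the periodogram I(λ_j) = |w_y(λ_j)|² at Fourier frequency λ_j = 2πj/T satisfies E^{1/2}|w_u(λ_j)|² = O(1), E|y_T| = O(T^{1/2}), |1 - e^{iλ_j}|^{-2} ≤ C λ_j^{-2}, and hence I(λ_j) = O_p(j^{-2} T²). -/

import Mathlib

open MeasureTheory Complex Real Finset

lemma absSqSum (s : Finset ℕ) (v : ℕ → ℝ) (z : ℕ → ℂ) :
    (‖∑ t ∈ s, (v t : ℂ) * z t‖)^2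
      = ∑ p ∈ s ×ˢ s, v p.1 * v p.2 * (z p.1 * (starRingEnd ℂ) (z p.2)).re := by
  have h1 : ((∑ t ∈ s, (v t : ℂ) * z t) * (starRingEnd ℂ) (∑ t ∈ s, (v t : ℂ) * z t)).re
      = ∑ p ∈ s ×ˢ s, v p.1 * v p.2 * (z p.1 * (starRingEnd ℂ) (z p.2)).re := by
    rw [map_sum, Finset.sum_mul_sum, ← Finset.sum_product', Complex.re_sum]
    refine Finset.sum_congr rfl fun p _ => ?_
    rw [map_mul, Complex.conj_ofReal,
      show (v p.1 : ℂ) * z p.1 * ((v p.2 : ℂ) * (starRingEnd ℂ) (z p.2))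
        = ((v p.1 * v p.2 : ℝ) : ℂ) * (z p.1 * (starRingEnd ℂ) (z p.2)) by push_cast; ring,
      Complex.re_ofReal_mul]
  rw [Complex.sq_norm, ← h1, Complex.mul_conj, Complex.ofReal_re]

lemma key_u {Ω : Type*} [MeasurableSpace Ω] (μ : Measure Ω) [IsProbabilityMeasure μ]
    (u : ℕ → Ω → ℝ) (σu : ℝ)
    (hint : ∀ s t, Integrable (fun ω => u s ω * u t ω) μ)
    (hvar : ∀ t, ∫ ω, (u t ω) ^ 2 ∂μ = σu ^ 2)
    (huncorr : ∀ s t, s ≠ t → ∫ ω, u s ω * u t ω ∂μ = 0)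
    (s : Finset ℕ) (z : ℕ → ℂ) (hz : ∀ t ∈ s, ‖z t‖ = 1) :
    Integrable (fun ω => (‖∑ t ∈ s, (u t ω : ℂ) * z t‖)^2) μ ∧
    ∫ ω, (‖∑ t ∈ s, (u t ω : ℂ) * z t‖)^2 ∂μ = s.card * σu^2 := by
  have hfun : (fun ω => (‖∑ t ∈ s, (u t ω : ℂ) * z t‖)^2)
      = fun ω => ∑ p ∈ s ×ˢ s, u p.1 ω * u p.2 ω * (z p.1 * (starRingEnd ℂ) (z p.2)).re := by
    funext ω; exact absSqSum s (fun t => u t ω) z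
  have hterm : ∀ p : ℕ × ℕ, Integrable
      (fun ω => u p.1 ω * u p.2 ω * (z p.1 * (starRingEnd ℂ) (z p.2)).re) μ :=
    fun p => (hint p.1 p.2).mul_const _
  have hI : Integrable (fun ω => (‖∑ t ∈ s, (u t ω : ℂ) * z t‖)^2) μ := by
    rw [hfun]; exact integrable_finset_sum _ (fun p _ => hterm p)
  refine ⟨hI, ?_⟩
  rw [hfun, integral_finset_sum _ (fun p _ => hterm p)]
  have hterm2 : ∀ p : ℕ × ℕ,
      ∫ ω, u p.1 ω * u p.2 ω * (z p.1 * (starRingEnd ℂ) (z p.2)).re ∂μ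
        = (∫ ω, u p.1 ω * u p.2 ω ∂μ) * (z p.1 * (starRingEnd ℂ) (z p.2)).re :=
    fun p => integral_mul_const _ _
  calc ∑ p ∈ s ×ˢ s, ∫ ω, u p.1 ω * u p.2 ω * (z p.1 * (starRingEnd ℂ) (z p.2)).re ∂μ
      = ∑ x ∈ s, ∑ y ∈ s, (∫ ω, u x ω * u y ω ∂μ) * (z x * (starRingEnd ℂ) (z y)).re := by
        rw [Finset.sum_product]
        exact Finset.sum_congr rfl fun x _ => Finset.sum_congr rfl fun y _ => hterm2 (x, y)
    _ = ∑ x ∈ s, σu^2 := by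
        refine Finset.sum_congr rfl fun x hx => ?_
        rw [Finset.sum_eq_single_of_mem x hx]
        · have h1 : ∫ ω, u x ω * u x ω ∂μ = σu^2 := by
            simpa [pow_two] using hvar x
          have h2 : (z x * (starRingEnd ℂ) (z x)).re = 1 := by
            rw [Complex.mul_conj, Complex.ofReal_re, ← Complex.sq_norm, hz x hx]; norm_num
          rw [h1, h2, mul_one]
        · intro y _ hyx
          rw [huncorr x y (fun h => hyx h.symm), zero_mul]
    _ = s.card * σu^2 := by rw [Finset.sum_const, nsmul_eq_mul]

lemma ydecomp {Ω : Type*} (u y : ℕ → Ω → ℝ)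
    (hrec : ∀ t ω, y (t + 1) ω = y t ω + u (t + 1) ω) (T : ℕ) (ω : Ω) :
    y T ω = y 0 ω + ∑ t ∈ Finset.Icc 1 T, u t ω := by
  induction T with
  | zero => simp
  | succ T ih =>
      rw [Finset.sum_Icc_succ_top (Nat.le_add_left 1 T), hrec, ih]; ring

lemma abel {Ω : Type*} (u y : ℕ → Ω → ℝ)
    (hrec : ∀ t ω, y (t + 1) ω = y t ω + u (t + 1) ω) (z : ℂ) (T : ℕ) (ω : Ω) :
    (1 - z) * ∑ t ∈ Finset.Icc 1 T, (y t ω : ℂ) * z ^ t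
      = (∑ t ∈ Finset.Icc 1 T, (u t ω : ℂ) * z ^ t)
        + z * (y 0 ω : ℂ) - z ^ (T + 1) * (y T ω : ℂ) := by
  induction T with
  | zero => simp
  | succ T ih =>
      rw [Finset.sum_Icc_succ_top (Nat.le_add_left 1 T),
        Finset.sum_Icc_succ_top (Nat.le_add_left 1 T), hrec]
      push_cast
      linear_combination ih

lemma key_y2 {Ω : Type*} [MeasurableSpace Ω] (μ : Measure Ω) [IsProbabilityMeasure μ]
    (u y : ℕ → Ω → ℝ) (σu C0 : ℝ)
    (hint : ∀ s t, Integrable (fun ω => u s ω * u t ω) μ)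
    (hvar : ∀ t, ∫ ω, (u t ω) ^ 2 ∂μ = σu ^ 2)
    (huncorr : ∀ s t, s ≠ t → ∫ ω, u s ω * u t ω ∂μ = 0)
    (hy0int : Integrable (fun ω => (y 0 ω) ^ 2) μ)
    (hy0 : ∫ ω, (y 0 ω) ^ 2 ∂μ ≤ C0)
    (hy0u : ∀ t, Integrable (fun ω => y 0 ω * u t ω) μ)
    (hrec : ∀ t ω, y (t + 1) ω = y t ω + u (t + 1) ω) (T : ℕ) :
    Integrable (fun ω => (y T ω)^2) μ ∧
    ∫ ω, (y T ω)^2 ∂μ ≤ C0 + T * (C0 + σu^2) + T * σu^2 := by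
  set s : Finset ℕ := Finset.Icc 1 T with hs
  have hcard : s.card = T := by simp [hs]
  have hfun : (fun ω => (y T ω)^2)
      = fun ω => (y 0 ω)^2 + (∑ t ∈ s, 2 * (y 0 ω * u t ω))
          + ∑ p ∈ s ×ˢ s, u p.1 ω * u p.2 ω := by
    funext ω
    have e1 : ∑ t ∈ s, 2 * (y 0 ω * u t ω) = 2 * (y 0 ω * ∑ t ∈ s, u t ω) := by
      rw [Finset.mul_sum, Finset.mul_sum]
    have e2 : ∑ p ∈ s ×ˢ s, u p.1 ω * u p.2 ω
        = (∑ t ∈ s, u t ω) * (∑ t ∈ s, u t ω) := by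
      rw [Finset.sum_mul_sum, ← Finset.sum_product']
    rw [ydecomp u y hrec T ω, e1, e2]
    ring
  have hIc : Integrable (fun ω => (∑ t ∈ s, 2 * (y 0 ω * u t ω))) μ :=
    integrable_finset_sum _ (fun t _ => ((hy0u t).const_mul 2))
  have hIp : Integrable (fun ω => ∑ p ∈ s ×ˢ s, u p.1 ω * u p.2 ω) μ :=
    integrable_finset_sum _ (fun p _ => hint p.1 p.2)
  have hI : Integrable (fun ω => (y T ω)^2) μ := by
    rw [hfun]; exact (hy0int.add hIc).add hIp
  refine ⟨hI, ?_⟩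
  have h1 : ∫ ω, ((y 0 ω)^2 + (∑ t ∈ s, 2 * (y 0 ω * u t ω))
        + ∑ p ∈ s ×ˢ s, u p.1 ω * u p.2 ω) ∂μ
      = (∫ ω, ((y 0 ω)^2 + ∑ t ∈ s, 2 * (y 0 ω * u t ω)) ∂μ)
        + ∫ ω, (∑ p ∈ s ×ˢ s, u p.1 ω * u p.2 ω) ∂μ := integral_add (hy0int.add hIc) hIp
  have h2 : ∫ ω, ((y 0 ω)^2 + ∑ t ∈ s, 2 * (y 0 ω * u t ω)) ∂μ
      = (∫ ω, (y 0 ω)^2 ∂μ) + ∫ ω, (∑ t ∈ s, 2 * (y 0 ω * u t ω)) ∂μ :=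
    integral_add hy0int hIc
  rw [hfun, h1, h2, integral_finset_sum _ (fun t _ => ((hy0u t).const_mul 2)),
    integral_finset_sum _ (fun p _ => hint p.1 p.2)]
  have hcross : ∀ t, ∫ ω, 2 * (y 0 ω * u t ω) ∂μ ≤ C0 + σu^2 := by
    intro t
    have hb : ∀ ω, 2 * (y 0 ω * u t ω) ≤ (y 0 ω)^2 + (u t ω)^2 := by
      intro ω; nlinarith [sq_nonneg (y 0 ω - u t ω)]
    calc ∫ ω, 2 * (y 0 ω * u t ω) ∂μ
        ≤ ∫ ω, ((y 0 ω)^2 + (u t ω)^2) ∂μ := by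
          refine integral_mono ((hy0u t).const_mul 2) (hy0int.add ?_) hb
          simpa [pow_two] using hint t t
      _ = (∫ ω, (y 0 ω)^2 ∂μ) + ∫ ω, (u t ω)^2 ∂μ := by
          refine integral_add hy0int ?_
          simpa [pow_two] using hint t t
      _ ≤ C0 + σu^2 := by rw [hvar]; linarith
  have hsum1 : ∑ t ∈ s, ∫ ω, 2 * (y 0 ω * u t ω) ∂μ ≤ T * (C0 + σu^2) := by
    calc ∑ t ∈ s, ∫ ω, 2 * (y 0 ω * u t ω) ∂μ ≤ ∑ _t ∈ s, (C0 + σu^2) :=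
          Finset.sum_le_sum fun t _ => hcross t
      _ = T * (C0 + σu^2) := by rw [Finset.sum_const, hcard, nsmul_eq_mul]
  have hsum2 : ∑ p ∈ s ×ˢ s, ∫ ω, u p.1 ω * u p.2 ω ∂μ = T * σu^2 := by
    rw [Finset.sum_product]
    have : ∀ x ∈ s, ∑ y ∈ s, ∫ ω, u x ω * u y ω ∂μ = σu^2 := by
      intro x hx
      rw [Finset.sum_eq_single_of_mem x hx]
      · simpa [pow_two] using hvar x
      · intro b _ hbx; exact huncorr x b fun h => hbx h.symm
    rw [Finset.sum_congr rfl this, Finset.sum_const, hcard, nsmul_eq_mul]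
  rw [hsum2]
  linarith [hsum1]

lemma oneSubExpSq {lr : ℝ} (h0 : 0 < lr) (hle : lr ≤ π) :
    4/π^2 * lr^2 ≤ (‖1 - Complex.exp (Complex.I * (lr:ℝ))‖)^2 := by
  have hz1 : (1 : ℂ) - Complex.exp (Complex.I * (lr:ℝ))
      = Complex.ofReal (1 - Real.cos lr) + Complex.ofReal (- Real.sin lr) * Complex.I := by
    rw [show Complex.I * (lr:ℂ) = (lr:ℂ) * Complex.I from mul_comm _ _, Complex.exp_mul_I,
      ← Complex.ofReal_cos, ← Complex.ofReal_sin]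
    push_cast; ring
  have hD : (‖1 - Complex.exp (Complex.I * (lr:ℝ))‖)^2 = 2 - 2 * Real.cos lr := by
    rw [hz1, Complex.sq_norm, Complex.normSq_apply]
    simp [Complex.cos_ofReal_re, Complex.sin_ofReal_re]
    nlinarith [Real.sin_sq_add_cos_sq lr]
  rw [hD]
  have hcos := Real.cos_le_one_sub_mul_cos_sq (x := lr) (by rw [abs_of_pos h0]; exact hle)
  have h4 : 4/π^2 * lr^2 = 2 * (2/π^2 * lr^2) := by ring
  linarith

set_option maxHeartbeats 1600000 in
/-- for a unit-root process `y_t = y_{t-1} + u_t` with `y_0` bounded in `L²`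
and mean-zero uncorrelated noise of variance `σ_u²`, there is a constant `C` such that at
each Fourier frequency `λ_j = 2πj/T` with `1 ≤ j ≤ T/2`: `E|w_u(λ_j)|² ≤ C` (so
`E^{1/2}|w_u(λ_j)|² = O(1)`), `E|y_T| ≤ C √T` (so `E|y_T| = O(T^{1/2})`),
`|1 - e^{iλ_j}|⁻² ≤ C λ_j⁻²`, and the periodogram satisfies `E I(λ_j) ≤ C j⁻² T²`
(hence `I(λ_j) = O_p(j^{-2} T²)`). -/
theorem stmt12 {Ω : Type*} [MeasurableSpace Ω] (μ : Measure Ω) [IsProbabilityMeasure μ]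
    (u y : ℕ → Ω → ℝ) (σu C0 : ℝ)
    (hmeasu : ∀ t, Measurable (u t)) (hmeasy : ∀ t, Measurable (y t))
    (hint : ∀ s t, Integrable (fun ω => u s ω * u t ω) μ)
    (hmean : ∀ t, ∫ ω, u t ω ∂μ = 0)
    (hvar : ∀ t, ∫ ω, (u t ω) ^ 2 ∂μ = σu ^ 2)
    (huncorr : ∀ s t, s ≠ t → ∫ ω, u s ω * u t ω ∂μ = 0)
    (hy0int : Integrable (fun ω => (y 0 ω) ^ 2) μ)
    (hy0 : ∫ ω, (y 0 ω) ^ 2 ∂μ ≤ C0)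
    (hy0u : ∀ t, Integrable (fun ω => y 0 ω * u t ω) μ)
    (hrec : ∀ t ω, y (t + 1) ω = y t ω + u (t + 1) ω) :
    ∃ C : ℝ, ∀ T j : ℕ, 1 ≤ j → 2 * j ≤ T →
      (∫ ω, (‖(1 / (Real.sqrt (2 * π * T) : ℂ)) *
            ∑ t ∈ Finset.Icc 1 T,
              (u t ω : ℂ) * Complex.exp (Complex.I * (2 * π * j / T : ℝ) * t)‖) ^ 2 ∂μ ≤ C) ∧
      (∫ ω, |y T ω| ∂μ ≤ C * Real.sqrt T) ∧
      ((‖1 - Complex.exp (Complex.I * (2 * π * j / T : ℝ))‖) ^ 2)⁻¹ ≤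
          C * (((2 * π * j / T : ℝ)) ^ 2)⁻¹ ∧
      (∫ ω, (‖(1 / (Real.sqrt (2 * π * T) : ℂ)) *
            ∑ t ∈ Finset.Icc 1 T,
              (y t ω : ℂ) * Complex.exp (Complex.I * (2 * π * j / T : ℝ) * t)‖) ^ 2 ∂μ ≤
          C * (T : ℝ) ^ 2 / (j : ℝ) ^ 2) := by
  have hC0 : 0 ≤ C0 := le_trans (integral_nonneg fun ω => sq_nonneg _) hy0
  have hσ : 0 ≤ σu ^ 2 := sq_nonneg _
  have hπ1 : (1:ℝ) ≤ 2 * π := by nlinarith [Real.pi_gt_three]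
  refine ⟨9*C0 + 9*σu^2 + π^2 + 3, fun T j hj hjT => ?_⟩
  set C : ℝ := 9*C0 + 9*σu^2 + π^2 + 3 with hCdef
  have hCge : 2*C0 + 2*σu^2 + 1 ≤ C := by nlinarith [Real.pi_gt_three]
  have hC1 : (1:ℝ) ≤ C := by nlinarith [Real.pi_gt_three]
  have hT2 : 2 ≤ T := le_trans (by omega) hjT
  have hTR : (0:ℝ) < T := by exact_mod_cast Nat.pos_of_ne_zero (by omega)
  have hT1R : (1:ℝ) ≤ T := by exact_mod_cast le_trans (by norm_num) hT2
  have hjR : (0:ℝ) < j := by exact_mod_cast Nat.pos_of_ne_zero (by omega)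
  have hTC : (T:ℂ) ≠ 0 := Nat.cast_ne_zero.mpr (by omega)
  set lr : ℝ := 2 * π * (j:ℝ) / (T:ℝ) with hlr
  have hlrpos : 0 < lr := by rw [hlr]; positivity
  have hjTR : 2 * (j:ℝ) ≤ (T:ℝ) := by exact_mod_cast hjT
  have hlrle : lr ≤ π := by
    rw [hlr, div_le_iff₀ hTR]
    nlinarith [Real.pi_pos]
  set z : ℂ := Complex.exp (Complex.I * (lr:ℝ)) with hzdef
  have habsz : ‖z‖ = 1 := by rw [hzdef, Complex.norm_exp]; simp
  have hexp : ∀ t : ℕ, Complex.exp (Complex.I * (lr:ℂ) * (t:ℂ)) = z ^ t := by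
    intro t
    rw [hzdef, ← Complex.exp_nat_mul]
    congr 1; ring
  have hzT : z ^ T = 1 := by
    rw [hzdef, ← Complex.exp_nat_mul]
    have harg : (T:ℂ) * (Complex.I * (lr:ℝ)) = (T:ℕ) * Complex.I * (lr:ℝ) := by push_cast; ring
    have harg2 : (T:ℕ) * Complex.I * ((lr:ℝ):ℂ) = (j:ℕ) * (2*π*Complex.I) := by
      rw [hlr]; push_cast; field_simp
    rw [harg, harg2, Complex.exp_nat_mul, Complex.exp_two_pi_mul_I, one_pow]
  have hU := key_u μ u σu hint hvar huncorr (Finset.Icc 1 T) (fun t => z^t)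
    (fun t _ => by rw [norm_pow, habsz, one_pow])
  have hcard : (Finset.Icc 1 T).card = T := by simp
  have hU2 : ∫ ω, (‖∑ t ∈ Finset.Icc 1 T, (u t ω : ℂ) * z^t‖)^2 ∂μ
      = (T:ℝ) * σu^2 := by rw [hU.2, hcard]
  have hY := key_y2 μ u y σu C0 hint hvar huncorr hy0int hy0 hy0u hrec T
  set cr2 : ℝ := (2*π*(T:ℝ))⁻¹ with hcr2
  have hcr2pos : 0 < cr2 := by rw [hcr2]; positivity
  have habc : ∀ w : ℂ,
      (‖(1 / (Real.sqrt (2 * π * T) : ℂ)) * w‖)^2 = cr2 * (‖w‖)^2 := by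
    intro w
    rw [norm_mul, mul_pow]
    congr 1
    rw [norm_div, norm_one, Complex.norm_real, Real.norm_eq_abs, _root_.abs_of_nonneg (Real.sqrt_nonneg _), div_pow,
      one_pow, Real.sq_sqrt (by positivity), hcr2, one_div]
  -- facts for part 3 / part 4
  have hDlb : 4/π^2 * lr^2 ≤ (‖1 - z‖)^2 := oneSubExpSq hlrpos hlrle
  have hDpos : 0 < (‖1 - z‖)^2 := lt_of_lt_of_le (by positivity) hDlb
  refine ⟨?_, ?_, ?_, ?_⟩
  · -- Part 1
    simp only [hexp, habc]
    rw [integral_const_mul, hU2]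
    have he : cr2 * ((T:ℝ) * σu^2) = σu^2 / (2*π) := by
      rw [hcr2]; field_simp
    rw [he]
    calc σu^2 / (2*π) ≤ σu^2 := div_le_self hσ hπ1
      _ ≤ C := by rw [hCdef]; nlinarith [Real.pi_pos]
  · -- Part 2
    set B : ℝ := (2*C0 + 2*σu^2 + 1) * T with hB
    have hBpos : 0 < B := by rw [hB]; positivity
    have hyB : ∫ ω, (y T ω)^2 ∂μ ≤ B := by
      have h := hY.2; rw [hB]; nlinarith [hT1R, hC0, hσ]
    set a : ℝ := Real.sqrt B with ha
    have hapos : 0 < a := Real.sqrt_pos.mpr hBpos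
    have hptw : ∀ ω, |y T ω| ≤ ((y T ω)^2 / a + a) / 2 := by
      intro ω
      have ht : (y T ω)^2 / a * a = (y T ω)^2 := div_mul_cancel₀ _ hapos.ne'
      nlinarith [sq_nonneg (|y T ω| - a), hapos, ht, _root_.sq_abs (y T ω)]
    have hgint : Integrable (fun ω => ((y T ω)^2 / a + a)/2) μ :=
      ((hY.1.div_const a).add (integrable_const a)).div_const 2
    calc ∫ ω, |y T ω| ∂μ ≤ ∫ ω, ((y T ω)^2 / a + a)/2 ∂μ :=
          integral_mono_of_nonneg (Filter.Eventually.of_forall fun ω => abs_nonneg _) hgint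
            (Filter.Eventually.of_forall hptw)
      _ = ((∫ ω, (y T ω)^2 ∂μ)/a + a)/2 := by
          have e1 : ∫ ω, ((y T ω)^2 / a + a)/2 ∂μ = (∫ ω, ((y T ω)^2 / a + a) ∂μ)/2 :=
            integral_div 2 _
          have e2 : ∫ ω, ((y T ω)^2 / a + a) ∂μ
              = (∫ ω, (y T ω)^2/a ∂μ) + ∫ _ω, (a:ℝ) ∂μ :=
            integral_add (hY.1.div_const a) (integrable_const a)
          have e3 : ∫ ω, (y T ω)^2/a ∂μ = (∫ ω, (y T ω)^2 ∂μ)/a := integral_div a _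
          have e4 : ∫ _ω, (a:ℝ) ∂μ = a := by simp
          rw [e1, e2, e3, e4]
      _ ≤ (B/a + a)/2 := by gcongr
      _ = a := by rw [ha, Real.div_sqrt]; ring
      _ = Real.sqrt (2*C0 + 2*σu^2 + 1) * Real.sqrt T := by
          rw [ha, hB, Real.sqrt_mul (by positivity)]
      _ ≤ C * Real.sqrt T := by
          have h1 : Real.sqrt (2*C0+2*σu^2+1) ≤ C := by
            rw [show C = Real.sqrt (C^2) from (Real.sqrt_sq (by linarith)).symm]
            exact Real.sqrt_le_sqrt (by nlinarith)
          exact mul_le_mul_of_nonneg_right h1 (Real.sqrt_nonneg _)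
  · -- Part 3
    calc ((‖1 - z‖)^2)⁻¹ ≤ (4/π^2 * lr^2)⁻¹ := by
          apply inv_anti₀ (by positivity) hDlb
      _ = (π^2/4) * (lr^2)⁻¹ := by
          rw [show 4/π^2 * lr^2 = ((π^2/4) : ℝ)⁻¹ * lr^2 by field_simp, mul_inv, inv_inv]
      _ ≤ C * (lr^2)⁻¹ := by
          apply mul_le_mul_of_nonneg_right _ (by positivity)
          rw [hCdef]; nlinarith
  · -- Part 4
    have habel : ∀ ω, (1 - z) * (∑ t ∈ Finset.Icc 1 T, (y t ω:ℂ) * z^t)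
        = (∑ t ∈ Finset.Icc 1 T, (u t ω:ℂ) * z^t) + z * (y 0 ω:ℂ) - z * (y T ω:ℂ) := by
      intro ω
      have h := abel u y hrec z T ω
      rwa [pow_succ, hzT, one_mul] at h
    have hpt4 : ∀ ω, cr2 * (‖∑ t ∈ Finset.Icc 1 T, (y t ω:ℂ) * z^t‖)^2
        ≤ ((‖1-z‖)^2)⁻¹ * (3*cr2) *
          ((‖∑ t ∈ Finset.Icc 1 T, (u t ω:ℂ) * z^t‖)^2 + (y 0 ω)^2 + (y T ω)^2) := by
      intro ω
      set Sy := ∑ t ∈ Finset.Icc 1 T, (y t ω:ℂ) * z^t with hSy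
      set Su := ∑ t ∈ Finset.Icc 1 T, (u t ω:ℂ) * z^t with hSu
      have htri : ‖(1-z) * Sy‖ ≤ ‖Su‖ + |y 0 ω| + |y T ω| := by
        rw [habel ω]
        calc ‖Su + z*(y 0 ω:ℂ) - z*(y T ω:ℂ)‖
            ≤ ‖Su + z*(y 0 ω:ℂ)‖ + ‖z*(y T ω:ℂ)‖ := by
              rw [sub_eq_add_neg]
              exact le_trans (norm_add_le _ _) (by rw [norm_neg])
          _ ≤ ‖Su‖ + ‖z*(y 0 ω:ℂ)‖ + ‖z*(y T ω:ℂ)‖ := by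
              have h := norm_add_le Su (z*(y 0 ω:ℂ)); linarith
          _ = ‖Su‖ + |y 0 ω| + |y T ω| := by
              rw [norm_mul, habsz, one_mul, Complex.norm_real, Real.norm_eq_abs, norm_mul, habsz, one_mul,
                Complex.norm_real, Real.norm_eq_abs]
      have hsq : (‖1-z‖)^2 * (‖Sy‖)^2
          ≤ 3 * ((‖Su‖)^2 + (y 0 ω)^2 + (y T ω)^2) := by
        have h2 : (‖1-z‖)^2 * (‖Sy‖)^2
            = (‖(1-z)*Sy‖)^2 := by rw [norm_mul, mul_pow]
        have h3 : (‖(1-z)*Sy‖)^2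
            ≤ (‖Su‖ + |y 0 ω| + |y T ω|)^2 :=
          pow_le_pow_left₀ (norm_nonneg _) htri 2
        have h4 : (‖Su‖ + |y 0 ω| + |y T ω|)^2
            ≤ 3 * ((‖Su‖)^2 + |y 0 ω|^2 + |y T ω|^2) := by
          nlinarith [sq_nonneg (‖Su‖ - |y 0 ω|), sq_nonneg (‖Su‖ - |y T ω|),
            sq_nonneg (|y 0 ω| - |y T ω|)]
        rw [_root_.sq_abs, _root_.sq_abs] at h4
        rw [h2]; linarith
      have h5 := mul_le_mul_of_nonneg_left hsq (le_of_lt (inv_pos.mpr hDpos))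
      rw [← mul_assoc, inv_mul_cancel₀ hDpos.ne', one_mul] at h5
      calc cr2 * (‖Sy‖)^2
          ≤ cr2 * (((‖1-z‖)^2)⁻¹ *
              (3 * ((‖Su‖)^2 + (y 0 ω)^2 + (y T ω)^2))) :=
            mul_le_mul_of_nonneg_left h5 hcr2pos.le
        _ = ((‖1-z‖)^2)⁻¹ * (3*cr2) *
              ((‖Su‖)^2 + (y 0 ω)^2 + (y T ω)^2) := by ring
    have hgint4 : Integrable (fun ω => ((‖1-z‖)^2)⁻¹ * (3*cr2) *
        ((‖∑ t ∈ Finset.Icc 1 T, (u t ω:ℂ) * z^t‖)^2 + (y 0 ω)^2 + (y T ω)^2)) μ :=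
      ((hU.1.add hy0int).add hY.1).const_mul _
    have hDinv : ((‖1-z‖)^2)⁻¹ ≤ (T:ℝ)^2/(16*(j:ℝ)^2) := by
      calc ((‖1-z‖)^2)⁻¹ ≤ (4/π^2 * lr^2)⁻¹ := inv_anti₀ (by positivity) hDlb
        _ = (T:ℝ)^2/(16*(j:ℝ)^2) := by
            rw [hlr]; field_simp; ring
    have hKC : 9*C0 + 9*σu^2 ≤ C := by rw [hCdef]; nlinarith [Real.pi_pos]
    have hX : (T:ℝ)*σu^2 + C0 + (C0 + (T:ℝ)*(C0+σu^2) + (T:ℝ)*σu^2)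
        ≤ 3*(T:ℝ)*(C0+σu^2) := by nlinarith [hT1R, hC0, hσ]
    have h3cr : (3*cr2) * ((T:ℝ)*σu^2 + C0 + (C0 + (T:ℝ)*(C0+σu^2) + (T:ℝ)*σu^2))
        ≤ 9*C0 + 9*σu^2 := by
      calc (3*cr2) * ((T:ℝ)*σu^2 + C0 + (C0 + (T:ℝ)*(C0+σu^2) + (T:ℝ)*σu^2))
          ≤ (3*cr2) * (3*(T:ℝ)*(C0+σu^2)) := by
            apply mul_le_mul_of_nonneg_left hX (by positivity)
        _ = (9*C0 + 9*σu^2) * (2*π)⁻¹ := by rw [hcr2]; field_simp; ring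
        _ ≤ 9*C0 + 9*σu^2 := by
            have hinv : (2*π)⁻¹ ≤ 1 := inv_le_one_iff₀.mpr (Or.inr hπ1)
            nlinarith [hC0, hσ, inv_pos.mpr (lt_of_lt_of_le one_pos hπ1)]
    simp only [hexp, habc]
    calc ∫ ω, cr2 * (‖∑ t ∈ Finset.Icc 1 T, (y t ω:ℂ) * z^t‖)^2 ∂μ
        ≤ ∫ ω, ((‖1-z‖)^2)⁻¹ * (3*cr2) *
            ((‖∑ t ∈ Finset.Icc 1 T, (u t ω:ℂ) * z^t‖)^2
              + (y 0 ω)^2 + (y T ω)^2) ∂μ :=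
          integral_mono_of_nonneg (Filter.Eventually.of_forall fun ω => by positivity) hgint4
            (Filter.Eventually.of_forall hpt4)
      _ = ((‖1-z‖)^2)⁻¹ * (3*cr2) *
            ((∫ ω, (‖∑ t ∈ Finset.Icc 1 T, (u t ω:ℂ) * z^t‖)^2 ∂μ)
              + (∫ ω, (y 0 ω)^2 ∂μ) + ∫ ω, (y T ω)^2 ∂μ) := by
          rw [integral_const_mul]
          congr 1
          have e1 : ∫ ω, ((‖∑ t ∈ Finset.Icc 1 T, (u t ω:ℂ) * z^t‖)^2
                + (y 0 ω)^2 + (y T ω)^2) ∂μ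
              = (∫ ω, ((‖∑ t ∈ Finset.Icc 1 T, (u t ω:ℂ) * z^t‖)^2
                + (y 0 ω)^2) ∂μ) + ∫ ω, (y T ω)^2 ∂μ :=
            integral_add (hU.1.add hy0int) hY.1
          have e2 : ∫ ω, ((‖∑ t ∈ Finset.Icc 1 T, (u t ω:ℂ) * z^t‖)^2
                + (y 0 ω)^2) ∂μ
              = (∫ ω, (‖∑ t ∈ Finset.Icc 1 T, (u t ω:ℂ) * z^t‖)^2 ∂μ)
                + ∫ ω, (y 0 ω)^2 ∂μ :=
            integral_add hU.1 hy0int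
          rw [e1, e2]
      _ ≤ ((‖1-z‖)^2)⁻¹ * ((3*cr2) *
            ((T:ℝ)*σu^2 + C0 + (C0 + (T:ℝ)*(C0+σu^2) + (T:ℝ)*σu^2))) := by
          rw [mul_assoc]
          apply mul_le_mul_of_nonneg_left _ (by positivity)
          apply mul_le_mul_of_nonneg_left _ (by positivity)
          rw [hU2]
          have := hY.2
          linarith [hy0]
      _ ≤ ((T:ℝ)^2/(16*(j:ℝ)^2)) * (9*C0 + 9*σu^2) := by
          apply mul_le_mul hDinv h3cr (by positivity) (by positivity)
      _ ≤ C * (T:ℝ)^2 / (j:ℝ)^2 := by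
          rw [show C * (T:ℝ)^2 / (j:ℝ)^2 = ((T:ℝ)^2/(j:ℝ)^2) * C by ring]
          apply mul_le_mul _ hKC (by positivity) (by positivity)
          apply div_le_div_of_nonneg_left (by positivity) (by positivity) (by nlinarith)
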